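/- Given a nonsingular character η: R(E) → ℂ (an algebra homomorphism with η(E) ≠ 0), one has the direct sum decomposition R(f) = R(F,H) ⊕ R(f)·R_η(E) as vector spaces, where R_η(E) = ker η. -/

import Mathlib

open Polynomial

inductive SmithGen : Type
  | E | F | H

open SmithGen in
inductive SmithRel (f : ℂ[X]) : FreeAlgebra ℂ SmithGen → FreeAlgebra ℂ SmithGen → Prop
  | ef : SmithRel f (FreeAlgebra.ι ℂ E * FreeAlgebra.ι ℂ F - FreeAlgebra.ι ℂ F * FreeAlgebra.ι ℂ E)
      (aeval (FreeAlgebra.ι ℂ H) f)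
  | he : SmithRel f (FreeAlgebra.ι ℂ H * FreeAlgebra.ι ℂ E - FreeAlgebra.ι ℂ E * FreeAlgebra.ι ℂ H)
      (FreeAlgebra.ι ℂ E)
  | hf : SmithRel f (FreeAlgebra.ι ℂ H * FreeAlgebra.ι ℂ F - FreeAlgebra.ι ℂ F * FreeAlgebra.ι ℂ H)
      (-FreeAlgebra.ι ℂ F)

/-- Smith's algebra `R(f)`, similar to `U(sl₂)`. -/
abbrev SmithAlgebra (f : ℂ[X]) : Type := RingQuot (SmithRel f)

noncomputable def SmithE (f : ℂ[X]) : SmithAlgebra f :=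
  RingQuot.mkAlgHom ℂ (SmithRel f) (FreeAlgebra.ι ℂ SmithGen.E)

noncomputable def SmithF (f : ℂ[X]) : SmithAlgebra f :=
  RingQuot.mkAlgHom ℂ (SmithRel f) (FreeAlgebra.ι ℂ SmithGen.F)

noncomputable def SmithH (f : ℂ[X]) : SmithAlgebra f :=
  RingQuot.mkAlgHom ℂ (SmithRel f) (FreeAlgebra.ι ℂ SmithGen.H)

/-- The Casimir element `Ω = 2FE + u(H+1)`. -/
noncomputable def SmithOmega (f u : ℂ[X]) : SmithAlgebra f :=
  2 * SmithF f * SmithE f + aeval (SmithH f) (u.comp (X + 1))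

/-- The subalgebra `R(E)` of `R(f)` generated by `E`. -/
noncomputable def SmithRE (f : ℂ[X]) : Subalgebra ℂ (SmithAlgebra f) :=
  Algebra.adjoin ℂ {SmithE f}

/-- The subalgebra `R(F,H)` of `R(f)` generated by `F` and `H`. -/
noncomputable def SmithRFH (f : ℂ[X]) : Subalgebra ℂ (SmithAlgebra f) :=
  Algebra.adjoin ℂ {SmithF f, SmithH f}

/-- `E` as an element of `R(E)`. -/
noncomputable def SmithE' (f : ℂ[X]) : SmithRE f :=
  ⟨SmithE f, Algebra.self_mem_adjoin_singleton ℂ _⟩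

/-- The subspace `R(f)·R_η(E)` of `R(f)`, where `R_η(E) = ker η`. -/
noncomputable def SmithEtaIdeal (f : ℂ[X]) (η : SmithRE f →ₐ[ℂ] ℂ) :
    Submodule ℂ (SmithAlgebra f) :=
  Submodule.span ℂ {z | ∃ (r : SmithAlgebra f) (x : SmithRE f), η x = 0 ∧ z = r * (x : SmithAlgebra f)}


noncomputable section SmithAux
open SmithGen Finsupp LinearMap

/-- The underlying space of the Whittaker-type module: basis `single a h ↔ F^a h(H)`. -/
abbrev SV : Type := ℕ →₀ ℂ[X]

/-- `h(X) ↦ h(X-1)`. -/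
noncomputable def sShift : ℂ[X] →ₗ[ℂ] ℂ[X] := (aeval (X - 1 : ℂ[X])).toLinearMap

noncomputable def sG (f : ℂ[X]) (a : ℕ) : ℂ[X] :=
  ∑ j ∈ Finset.range a, aeval (X - C (j : ℂ)) f

noncomputable def opF : Module.End ℂ SV := Finsupp.lsum ℂ fun a => lsingle (a + 1)

noncomputable def opH : Module.End ℂ SV :=
  Finsupp.lsum ℂ fun a => lsingle a ∘ₗ mulLeft ℂ (X - C (a : ℂ))

noncomputable def opE (l : ℂ) (f : ℂ[X]) : Module.End ℂ SV :=
  Finsupp.lsum ℂ fun a => l • (lsingle a ∘ₗ sShift) + lsingle (a - 1) ∘ₗ mulLeft ℂ (sG f a)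

@[simp] lemma opF_single (a : ℕ) (h : ℂ[X]) : opF (single a h) = single (a + 1) h := by
  simp [opF]

@[simp] lemma opH_single (a : ℕ) (h : ℂ[X]) :
    opH (single a h) = single a ((X - C (a : ℂ)) * h) := by
  simp [opH]

@[simp] lemma opE_single (l : ℂ) (f : ℂ[X]) (a : ℕ) (h : ℂ[X]) :
    opE l f (single a h) = l • single a (aeval (X - 1 : ℂ[X]) h)
      + single (a - 1) (sG f a * h) := by
  simp [opE, sShift]

@[simp] lemma sG_zero (f : ℂ[X]) : sG f 0 = 0 := by simp [sG]

lemma sG_succ (f : ℂ[X]) (a : ℕ) :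
    sG f (a + 1) = sG f a + aeval (X - C (a : ℂ)) f := Finset.sum_range_succ _ _

lemma aeval_opH_single (p : ℂ[X]) (a : ℕ) (h : ℂ[X]) :
    aeval opH p (single a h) = single a (aeval (X - C (a : ℂ)) p * h) := by
  induction p using Polynomial.induction_on' with
  | add p q hp hq => simp [map_add, LinearMap.add_apply, hp, hq, add_mul, single_add]
  | monomial n c =>
      have key : ∀ n : ℕ, (opH ^ n) (single a h) = single a ((X - C (a : ℂ)) ^ n * h) := by
        intro n
        induction n with
        | zero => simp
        | succ n ih => rw [pow_succ', Module.End.mul_apply, ih, opH_single, ← mul_assoc,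
            ← pow_succ']
      rw [aeval_monomial, Module.End.mul_apply, key, Module.algebraMap_end_apply, aeval_monomial,
        smul_single, Polynomial.smul_eq_C_mul, Polynomial.algebraMap_eq, ← mul_assoc]

theorem smith_rel_hf : opH * opF - opF * opH = -opF := by
  refine Finsupp.lhom_ext fun a h => ?_
  simp only [LinearMap.sub_apply, Module.End.mul_apply, LinearMap.neg_apply, opF_single, opH_single]
  rw [← single_neg, ← single_sub]
  congr 1
  push_cast
  simp only [C_add, C_1]
  ring

theorem smith_rel_he (l : ℂ) (f : ℂ[X]) :
    opH * opE l f - opE l f * opH = opE l f := by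
  refine Finsupp.lhom_ext fun a h => ?_
  simp only [LinearMap.sub_apply, Module.End.mul_apply, opE_single, opH_single, map_add, map_smul,
    map_mul, map_sub, aeval_X, aeval_C, smul_single]
  cases a with
  | zero =>
      simp only [Nat.zero_sub, sG_zero, zero_mul, mul_zero, single_zero, add_zero, Nat.cast_zero,
        map_zero, sub_zero]
      rw [← single_sub]
      congr 1
      simp only [smul_eq_C_mul, Polynomial.algebraMap_eq]
      ring
  | succ b =>
      simp only [Nat.add_sub_cancel]
      rw [sub_sub, add_sub_add_comm, ← single_sub, ← single_sub]
      congr 1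
      · congr 1
        simp only [smul_eq_C_mul, Polynomial.algebraMap_eq]
        push_cast
        simp only [C_add, C_1]
        ring
      · congr 1
        push_cast
        simp only [C_add, C_1]
        ring

theorem smith_rel_ef (l : ℂ) (f : ℂ[X]) :
    opE l f * opF - opF * opE l f = aeval opH f := by
  refine Finsupp.lhom_ext fun a h => ?_
  simp only [LinearMap.sub_apply, Module.End.mul_apply, opE_single, opF_single, map_add, map_smul,
    smul_single, aeval_opH_single, Nat.add_sub_cancel]
  cases a with
  | zero => simp [sG_succ]
  | succ b =>
      simp only [Nat.add_sub_cancel, Nat.succ_sub_one]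
      rw [add_sub_add_comm, sub_self, zero_add, ← single_sub, ← sub_mul, sG_succ,
        add_sub_cancel_left]


/-- Generators of the representation. -/
noncomputable def smithGenMap (l : ℂ) (f : ℂ[X]) : SmithGen → Module.End ℂ SV
  | SmithGen.E => opE l f
  | SmithGen.F => opF
  | SmithGen.H => opH

/-- The Whittaker-type representation of `R(f)` on `SV`. -/
noncomputable def smithRho (l : ℂ) (f : ℂ[X]) : SmithAlgebra f →ₐ[ℂ] Module.End ℂ SV :=
  RingQuot.liftAlgHom ℂ ⟨FreeAlgebra.lift ℂ (smithGenMap l f), by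
    intro x y r
    induction r with
    | ef =>
        rw [← Polynomial.aeval_algHom_apply]
        simp only [map_sub, map_mul, FreeAlgebra.lift_ι_apply, smithGenMap]
        exact smith_rel_ef l f
    | he =>
        simp only [map_sub, map_mul, FreeAlgebra.lift_ι_apply, smithGenMap]
        exact smith_rel_he l f
    | hf =>
        simp only [map_sub, map_mul, map_neg, FreeAlgebra.lift_ι_apply, smithGenMap]
        exact smith_rel_hf⟩

@[simp] lemma smithRho_E (l : ℂ) (f : ℂ[X]) : smithRho l f (SmithE f) = opE l f := by
  rw [SmithE, smithRho, RingQuot.liftAlgHom_mkAlgHom_apply, FreeAlgebra.lift_ι_apply]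
  rfl

@[simp] lemma smithRho_F (l : ℂ) (f : ℂ[X]) : smithRho l f (SmithF f) = opF := by
  rw [SmithF, smithRho, RingQuot.liftAlgHom_mkAlgHom_apply, FreeAlgebra.lift_ι_apply]
  rfl

@[simp] lemma smithRho_H (l : ℂ) (f : ℂ[X]) : smithRho l f (SmithH f) = opH := by
  rw [SmithH, smithRho, RingQuot.liftAlgHom_mkAlgHom_apply, FreeAlgebra.lift_ι_apply]
  rfl

/-- The PBW-type section `single a h ↦ F^a · h(H)`. -/
noncomputable def smithS (f : ℂ[X]) : SV →ₗ[ℂ] SmithAlgebra f :=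
  Finsupp.lsum ℂ fun a =>
    LinearMap.mulLeft ℂ (SmithF f ^ a) ∘ₗ (aeval (SmithH f) : ℂ[X] →ₐ[ℂ] _).toLinearMap

@[simp] lemma smithS_single (f : ℂ[X]) (a : ℕ) (h : ℂ[X]) :
    smithS f (single a h) = SmithF f ^ a * aeval (SmithH f) h := by
  simp [smithS]

/-- The projection-defining map `θ(r) = ρ(r)(δ₀)`. -/
noncomputable def smithTheta (l : ℂ) (f : ℂ[X]) : SmithAlgebra f →ₗ[ℂ] SV where
  toFun r := smithRho l f r (single 0 1)
  map_add' x y := by simp [map_add]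
  map_smul' c x := by simp [map_smul]

@[simp] lemma smithTheta_apply (l : ℂ) (f : ℂ[X]) (r : SmithAlgebra f) :
    smithTheta l f r = smithRho l f r (single 0 1) := rfl

lemma smith_rel1 (f : ℂ[X]) :
    SmithE f * SmithF f = SmithF f * SmithE f + aeval (SmithH f) f := by
  have := RingQuot.mkAlgHom_rel ℂ (SmithRel.ef (f := f))
  rw [map_sub, map_mul, map_mul, ← Polynomial.aeval_algHom_apply] at this
  rw [sub_eq_iff_eq_add] at this
  simpa [SmithE, SmithF, SmithH, add_comm] using this

lemma smith_rel2 (f : ℂ[X]) :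
    SmithH f * SmithE f = SmithE f * SmithH f + SmithE f := by
  have := RingQuot.mkAlgHom_rel ℂ (SmithRel.he (f := f))
  rw [map_sub, map_mul, map_mul, sub_eq_iff_eq_add] at this
  simpa [SmithE, SmithH, add_comm] using this

lemma smith_rel3 (f : ℂ[X]) :
    SmithH f * SmithF f = SmithF f * SmithH f - SmithF f := by
  have := RingQuot.mkAlgHom_rel ℂ (SmithRel.hf (f := f))
  rw [map_sub, map_mul, map_mul, map_neg, sub_eq_iff_eq_add] at this
  rw [SmithF, SmithH, this]
  abel

/-- `H·F^a = F^a·(H - a)`. -/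
lemma smith_H_Fpow (f : ℂ[X]) (a : ℕ) :
    SmithH f * SmithF f ^ a
      = SmithF f ^ a * (SmithH f - algebraMap ℂ (SmithAlgebra f) (a : ℂ)) := by
  induction a with
  | zero => simp
  | succ b ih =>
      have hc : (algebraMap ℂ (SmithAlgebra f)) (((b+1 : ℕ)) : ℂ)
          = algebraMap ℂ (SmithAlgebra f) (b : ℂ) + 1 := by
        push_cast
        simp [map_add, map_one]
      rw [pow_succ', ← mul_assoc, smith_rel3, sub_mul, mul_assoc, ih, hc,
        sub_add_eq_sub_sub]
      simp only [mul_sub, mul_assoc, mul_one]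

/-- `h(H)·F^b = F^b·h(H-b)`. -/
lemma smith_hH_Fpow (f : ℂ[X]) (h : ℂ[X]) (b : ℕ) :
    aeval (SmithH f) h * SmithF f ^ b
      = SmithF f ^ b * aeval (SmithH f) (aeval (X - C (b : ℂ)) h) := by
  induction h using Polynomial.induction_on' with
  | add p q hp hq => rw [map_add, add_mul, hp, hq, map_add, map_add, mul_add]
  | monomial n c =>
      have key : ∀ n : ℕ, SmithH f ^ n * SmithF f ^ b
          = SmithF f ^ b * (SmithH f - algebraMap ℂ (SmithAlgebra f) (b : ℂ)) ^ n := by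
        intro n
        induction n with
        | zero => simp
        | succ m ih =>
            rw [pow_succ', mul_assoc, ih, ← mul_assoc, smith_H_Fpow, mul_assoc, ← pow_succ']
      rw [aeval_monomial, mul_assoc, key, aeval_monomial, map_mul, map_pow, map_sub, aeval_X,
        aeval_C, Polynomial.algebraMap_eq, aeval_C, ← mul_assoc,
        Algebra.commutes c (SmithF f ^ b), mul_assoc]

/-- `E·h(H) = h(H-1)·E`. -/
lemma smith_E_hH (f : ℂ[X]) (h : ℂ[X]) :
    SmithE f * aeval (SmithH f) h
      = aeval (SmithH f) (aeval (X - 1 : ℂ[X]) h) * SmithE f := by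
  induction h using Polynomial.induction_on' with
  | add p q hp hq => rw [map_add, mul_add, hp, hq, map_add, map_add, add_mul]
  | monomial n c =>
      have key : ∀ n : ℕ, SmithE f * SmithH f ^ n = (SmithH f - 1) ^ n * SmithE f := by
        intro n
        induction n with
        | zero => simp
        | succ m ih =>
            have hEH : SmithE f * SmithH f = (SmithH f - 1) * SmithE f := by
              rw [sub_mul, one_mul, eq_sub_iff_add_eq, ← smith_rel2]
            rw [pow_succ, ← mul_assoc, ih, mul_assoc, hEH, ← mul_assoc, ← pow_succ]
      rw [aeval_monomial, ← mul_assoc, ← Algebra.commutes c, mul_assoc, key, aeval_monomial,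
        map_mul, map_pow, map_sub, aeval_X, map_one, Polynomial.algebraMap_eq, aeval_C,
        ← mul_assoc]

lemma sG_shift (f : ℂ[X]) (m : ℕ) :
    aeval (X - C ((1:ℕ) : ℂ)) (sG f m) = sG f (m + 1) - f := by
  rw [sG, map_sum, sG, Finset.sum_range_succ' _ m]
  have step : ∀ j : ℕ, aeval (X - C ((1:ℕ):ℂ)) (aeval (X - C (j:ℂ)) f)
      = aeval (X - C ((j+1 : ℕ):ℂ)) f := by
    intro j
    have harg : aeval (X - C ((1:ℕ):ℂ)) (X - C (j:ℂ)) = X - C ((j+1:ℕ):ℂ) := by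
      rw [map_sub, aeval_X, aeval_C, Polynomial.algebraMap_eq]
      push_cast
      simp only [C_add, C_1]
      ring
    rw [← Polynomial.aeval_algHom_apply, harg]
  rw [Finset.sum_congr rfl fun j _ => step j]
  have : aeval (X - C ((0:ℕ):ℂ)) f = f := by
    simp
  rw [this, add_sub_cancel_right]

/-- `E·F^a = F^a·E + F^(a-1)·g_a(H)`. -/
lemma smith_E_Fpow (f : ℂ[X]) (a : ℕ) :
    SmithE f * SmithF f ^ a
      = SmithF f ^ a * SmithE f + SmithF f ^ (a - 1) * aeval (SmithH f) (sG f a) := by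
  induction a with
  | zero => simp
  | succ b ih =>
      have h1 := smith_hH_Fpow f (sG f b) 1
      rw [pow_one] at h1
      rw [pow_succ, ← mul_assoc, ih, add_mul, mul_assoc (SmithF f ^ b), smith_rel1, mul_add,
        ← mul_assoc, ← pow_succ, mul_assoc (SmithF f ^ (b - 1)), h1, Nat.add_sub_cancel]
      cases b with
      | zero => simp [sG_succ]
      | succ c =>
          rw [← mul_assoc (SmithF f ^ (c + 1 - 1)), ← pow_succ, Nat.add_sub_cancel,
            sG_shift, add_assoc, ← mul_add, ← map_add, add_sub_cancel]

lemma opF_pow (n b : ℕ) (h : ℂ[X]) : (opF ^ n) (single b h) = single (b + n) h := by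
  induction n with
  | zero => simp
  | succ m ih => rw [pow_succ', Module.End.mul_apply, ih, opF_single, add_assoc]

/-- `θ ∘ s = id`. -/
lemma smithTheta_smithS (l : ℂ) (f : ℂ[X]) (v : SV) :
    smithTheta l f (smithS f v) = v := by
  induction v using Finsupp.induction_linear with
  | zero => simp
  | add x y hx hy => rw [map_add, map_add, hx, hy]
  | single a h =>
      rw [smithS_single, smithTheta_apply, map_mul, map_pow, smithRho_F,
        ← Polynomial.aeval_algHom_apply, smithRho_H, Module.End.mul_apply, aeval_opH_single,
        opF_pow]
      simp

lemma smithS_mem_RFH (f : ℂ[X]) (v : SV) : smithS f v ∈ SmithRFH f := by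
  induction v using Finsupp.induction_linear with
  | zero => simp [Subalgebra.zero_mem]
  | add x y hx hy => rw [map_add]; exact Subalgebra.add_mem _ hx hy
  | single a h =>
      rw [smithS_single]
      refine Subalgebra.mul_mem _ (Subalgebra.pow_mem _ ?_ a) ?_
      · exact Algebra.subset_adjoin (Set.mem_insert _ _)
      · have hH : SmithH f ∈ SmithRFH f :=
          Algebra.subset_adjoin (Set.mem_insert_of_mem _ rfl)
        have key : aeval (SmithH f) h
            = ((aeval (⟨SmithH f, hH⟩ : SmithRFH f) h : SmithRFH f) : SmithAlgebra f) :=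
          (Polynomial.aeval_subalgebra_coe h (SmithRFH f) ⟨SmithH f, hH⟩).symm
        rw [key]
        exact Subtype.coe_prop _

lemma RFH_mem_range (f : ℂ[X]) {x : SmithAlgebra f} (hx : x ∈ SmithRFH f) :
    ∃ v : SV, smithS f v = x := by
  have mulmem : ∀ v w : SV, ∃ u : SV, smithS f u = smithS f v * smithS f w := by
    intro v w
    induction v using Finsupp.induction_linear with
    | zero => exact ⟨0, by simp⟩
    | add x y hx hy =>
        obtain ⟨u1, hu1⟩ := hx
        obtain ⟨u2, hu2⟩ := hy
        exact ⟨u1 + u2, by rw [map_add, hu1, hu2, map_add, add_mul]⟩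
    | single a h =>
        induction w using Finsupp.induction_linear with
        | zero => exact ⟨0, by simp⟩
        | add x y hx hy =>
            obtain ⟨u1, hu1⟩ := hx
            obtain ⟨u2, hu2⟩ := hy
            exact ⟨u1 + u2, by rw [map_add, hu1, hu2, map_add, mul_add]⟩
        | single b k =>
            refine ⟨single (a + b) (aeval (X - C (b:ℂ)) h * k), ?_⟩
            rw [smithS_single, smithS_single, smithS_single, map_mul]
            rw [mul_assoc, ← mul_assoc (aeval (SmithH f) h), smith_hH_Fpow, pow_add]
            noncomm_ring
  induction hx using Algebra.adjoin_induction with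
  | mem y hy =>
      rcases hy with rfl | hy
      · exact ⟨single 1 1, by simp⟩
      · rcases hy with rfl
        exact ⟨single 0 X, by simp⟩
  | algebraMap c =>
      refine ⟨single 0 (C c), ?_⟩
      simp [Polynomial.algebraMap_eq]
  | add x y hx hy ihx ihy =>
      obtain ⟨u1, hu1⟩ := ihx
      obtain ⟨u2, hu2⟩ := ihy
      exact ⟨u1 + u2, by rw [map_add, hu1, hu2]⟩
  | mul x y hx hy ihx ihy =>
      obtain ⟨u1, rfl⟩ := ihx
      obtain ⟨u2, rfl⟩ := ihy
      exact mulmem u1 u2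

/-- Every element of `ker η` factors as `q(E)·(E - λ)`. -/
lemma eta_factor (f : ℂ[X]) (η : SmithRE f →ₐ[ℂ] ℂ) (x : SmithRE f) (hx : η x = 0) :
    ∃ q : ℂ[X], (x : SmithAlgebra f)
      = aeval (SmithE f) q * (SmithE f - algebraMap ℂ (SmithAlgebra f) (η (SmithE' f))) := by
  have h2 : (x : SmithAlgebra f) ∈ (aeval (SmithE f) : ℂ[X] →ₐ[ℂ] _).range := by
    rw [← Algebra.adjoin_singleton_eq_range_aeval]
    exact x.2
  obtain ⟨p, hp⟩ := h2
  have hx' : x = aeval (SmithE' f) p := by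
    apply Subtype.ext
    rw [← hp]
    exact (Polynomial.aeval_subalgebra_coe p (SmithRE f) (SmithE' f)).symm
  have hroot : Polynomial.IsRoot p (η (SmithE' f)) := by
    have h3 : η x = aeval (η (SmithE' f)) p := by
      rw [hx', Polynomial.aeval_algHom_apply]
    rw [hx] at h3
    rw [Polynomial.IsRoot, ← Polynomial.coe_aeval_eq_eval, ← h3]
  obtain ⟨q, hq⟩ := (Polynomial.dvd_iff_isRoot.mpr hroot)
  refine ⟨q, ?_⟩
  have hcomm : Commute (aeval (SmithE f) (X - C (η (SmithE' f)))) (aeval (SmithE f) q) :=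
    (Commute.all _ q).map (aeval (SmithE f) : ℂ[X] →ₐ[ℂ] _)
  rw [← hp, hq]
  show aeval (SmithE f) _ = _
  rw [map_mul, hcomm.eq, map_sub, aeval_X, aeval_C]

lemma opE_sub_l_single01 (l : ℂ) (f : ℂ[X]) :
    (opE l f - algebraMap ℂ (Module.End ℂ SV) l) (single 0 1) = 0 := by
  rw [LinearMap.sub_apply, Module.algebraMap_end_apply, opE_single]
  simp

/-- `θ` vanishes on the ideal `R(f)·R_η(E)`. -/
lemma smithTheta_ideal (f : ℂ[X]) (η : SmithRE f →ₐ[ℂ] ℂ) {z : SmithAlgebra f}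
    (hz : z ∈ SmithEtaIdeal f η) : smithTheta (η (SmithE' f)) f z = 0 := by
  set l := η (SmithE' f) with hl
  refine Submodule.span_induction ?_ (map_zero _) (fun a b _ _ ha hb => by
      rw [map_add, ha, hb, add_zero]) (fun c a _ ha => by rw [map_smul, ha, smul_zero]) hz
  rintro z ⟨r, x, hx, rfl⟩
  obtain ⟨q, hq⟩ := eta_factor f η x hx
  rw [smithTheta_apply, hq, map_mul, map_mul, Module.End.mul_apply, Module.End.mul_apply]
  rw [map_sub, AlgHom.commutes, smithRho_E]
  rw [opE_sub_l_single01, map_zero, map_zero]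

/-- The ideal is stable under left multiplication. -/
lemma smithEtaIdeal_mul_left (f : ℂ[X]) (η : SmithRE f →ₐ[ℂ] ℂ) (y : SmithAlgebra f)
    {z : SmithAlgebra f} (hz : z ∈ SmithEtaIdeal f η) : y * z ∈ SmithEtaIdeal f η := by
  refine Submodule.span_induction ?_ (by rw [mul_zero]; exact Submodule.zero_mem _)
    (fun a b _ _ ha hb => by rw [mul_add]; exact Submodule.add_mem _ ha hb)
    (fun c a _ ha => by rw [mul_smul_comm]; exact Submodule.smul_mem _ _ ha) hz
  rintro z ⟨r, x, hx, rfl⟩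
  rw [← mul_assoc]
  exact Submodule.subset_span ⟨y * r, x, hx, rfl⟩

lemma smith_adjoin_top (f : ℂ[X]) :
    Algebra.adjoin ℂ {SmithE f, SmithF f, SmithH f} = (⊤ : Subalgebra ℂ (SmithAlgebra f)) := by
  rw [eq_top_iff]
  intro x _
  obtain ⟨y, rfl⟩ := RingQuot.mkAlgHom_surjective ℂ (SmithRel f) x
  have hy : y ∈ Algebra.adjoin ℂ (Set.range (FreeAlgebra.ι ℂ (X := SmithGen))) := by
    rw [FreeAlgebra.adjoin_range_ι]
    trivial
  induction hy using Algebra.adjoin_induction with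
  | mem a ha =>
      obtain ⟨g, rfl⟩ := ha
      cases g with
      | E => exact Algebra.subset_adjoin (by left; rfl)
      | F => exact Algebra.subset_adjoin (by right; left; rfl)
      | H => exact Algebra.subset_adjoin (by right; right; rfl)
  | algebraMap c =>
      rw [AlgHom.commutes]
      exact Subalgebra.algebraMap_mem _ _
  | add a b _ _ iha ihb =>
      rw [map_add]
      exact Subalgebra.add_mem _ (iha Algebra.mem_top) (ihb Algebra.mem_top)
  | mul a b _ _ iha ihb =>
      rw [map_mul]
      exact Subalgebra.mul_mem _ (iha Algebra.mem_top) (ihb Algebra.mem_top)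

lemma smith_NF (f : ℂ[X]) (η : SmithRE f →ₐ[ℂ] ℂ) (v : SV) :
    SmithF f * smithS f v - smithS f (opF v) ∈ SmithEtaIdeal f η := by
  induction v using Finsupp.induction_linear with
  | zero => simp [Submodule.zero_mem]
  | add x y hx hy =>
      have : SmithF f * smithS f (x + y) - smithS f (opF (x + y))
          = (SmithF f * smithS f x - smithS f (opF x))
            + (SmithF f * smithS f y - smithS f (opF y)) := by
        rw [map_add, map_add, map_add, mul_add]
        abel
      rw [this]
      exact Submodule.add_mem _ hx hy
  | single a h =>
      rw [opF_single, smithS_single, smithS_single, ← mul_assoc, ← pow_succ', sub_self]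
      exact Submodule.zero_mem _

lemma smith_NH (f : ℂ[X]) (η : SmithRE f →ₐ[ℂ] ℂ) (v : SV) :
    SmithH f * smithS f v - smithS f (opH v) ∈ SmithEtaIdeal f η := by
  induction v using Finsupp.induction_linear with
  | zero => simp [Submodule.zero_mem]
  | add x y hx hy =>
      have : SmithH f * smithS f (x + y) - smithS f (opH (x + y))
          = (SmithH f * smithS f x - smithS f (opH x))
            + (SmithH f * smithS f y - smithS f (opH y)) := by
        rw [map_add, map_add, map_add, mul_add]
        abel
      rw [this]
      exact Submodule.add_mem _ hx hy
  | single a h =>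
      rw [opH_single, smithS_single, smithS_single, ← mul_assoc, smith_H_Fpow, map_mul, map_sub,
        aeval_X, aeval_C, mul_assoc, sub_self]
      exact Submodule.zero_mem _

lemma smith_NE (f : ℂ[X]) (η : SmithRE f →ₐ[ℂ] ℂ) (v : SV) :
    SmithE f * smithS f v - smithS f (opE (η (SmithE' f)) f v) ∈ SmithEtaIdeal f η := by
  set l := η (SmithE' f) with hl
  induction v using Finsupp.induction_linear with
  | zero => simp [Submodule.zero_mem]
  | add x y hx hy =>
      have : SmithE f * smithS f (x + y) - smithS f (opE l f (x + y))
          = (SmithE f * smithS f x - smithS f (opE l f x))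
            + (SmithE f * smithS f y - smithS f (opE l f y)) := by
        rw [map_add, map_add, map_add, mul_add]
        abel
      rw [this]
      exact Submodule.add_mem _ hx hy
  | single a h =>
      rw [opE_single, smithS_single, map_add, map_smul, smithS_single, smithS_single]
      have key : SmithE f * (SmithF f ^ a * aeval (SmithH f) h)
          = SmithF f ^ a * (aeval (SmithH f) (aeval (X - 1 : ℂ[X]) h) * SmithE f)
            + SmithF f ^ (a - 1) * aeval (SmithH f) (sG f a * h) := by
        rw [← mul_assoc, smith_E_Fpow, add_mul, mul_assoc, smith_E_hH, mul_assoc, map_mul]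
      rw [key]
      have rearrange : SmithF f ^ a * (aeval (SmithH f) (aeval (X - 1 : ℂ[X]) h) * SmithE f)
            + SmithF f ^ (a - 1) * aeval (SmithH f) (sG f a * h)
            - (l • (SmithF f ^ a * aeval (SmithH f) (aeval (X - 1 : ℂ[X]) h))
              + SmithF f ^ (a - 1) * aeval (SmithH f) (sG f a * h))
          = (SmithF f ^ a * aeval (SmithH f) (aeval (X - 1 : ℂ[X]) h))
              * (SmithE f - algebraMap ℂ (SmithAlgebra f) l) := by
        rw [add_sub_add_right_eq_sub, mul_sub, ← mul_assoc, Algebra.smul_def l,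
          Algebra.commutes l]
      rw [rearrange]
      refine Submodule.subset_span
        ⟨SmithF f ^ a * aeval (SmithH f) (aeval (X - 1 : ℂ[X]) h),
          SmithE' f - algebraMap ℂ (SmithRE f) l, ?_, ?_⟩
      · rw [map_sub η (SmithE' f) (algebraMap ℂ (SmithRE f) l), AlgHom.commutes]
        simp [hl]
      · push_cast
        rfl

/-- Main decomposition: `x - s(θ(x))` always lies in the ideal. -/
lemma smith_decomp_mem (f : ℂ[X]) (η : SmithRE f →ₐ[ℂ] ℂ) (x : SmithAlgebra f) :
    x - smithS f (smithTheta (η (SmithE' f)) f x) ∈ SmithEtaIdeal f η := by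
  set l := η (SmithE' f) with hl
  have hone : (1 : SmithAlgebra f) - smithS f (smithTheta l f 1) ∈ SmithEtaIdeal f η := by
    have : smithTheta l f 1 = single 0 1 := by
      rw [smithTheta_apply, map_one, Module.End.one_apply]
    rw [this, smithS_single, pow_zero, map_one, one_mul, sub_self]
    exact Submodule.zero_mem _
  -- closure of the condition under left multiplication by a generator
  have step : ∀ (G : SmithAlgebra f) (opG : Module.End ℂ SV),
      smithRho l f G = opG →
      (∀ v : SV, G * smithS f v - smithS f (opG v) ∈ SmithEtaIdeal f η) →
      ∀ w : SmithAlgebra f, w - smithS f (smithTheta l f w) ∈ SmithEtaIdeal f η →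
        G * w - smithS f (smithTheta l f (G * w)) ∈ SmithEtaIdeal f η := by
    intro G opG hG hN w hw
    have hth : smithTheta l f (G * w) = opG (smithTheta l f w) := by
      rw [smithTheta_apply, map_mul, Module.End.mul_apply, hG, smithTheta_apply]
    have hsplit : G * w - smithS f (smithTheta l f (G * w))
        = G * (w - smithS f (smithTheta l f w))
          + (G * smithS f (smithTheta l f w) - smithS f (opG (smithTheta l f w))) := by
      rw [hth, mul_sub]
      abel
    rw [hsplit]
    exact Submodule.add_mem _ (smithEtaIdeal_mul_left f η G hw) (hN _)
  have key : ∀ y ∈ Algebra.adjoin ℂ {SmithE f, SmithF f, SmithH f},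
      ∀ w : SmithAlgebra f, w - smithS f (smithTheta l f w) ∈ SmithEtaIdeal f η →
        y * w - smithS f (smithTheta l f (y * w)) ∈ SmithEtaIdeal f η := by
    intro y hy
    induction hy using Algebra.adjoin_induction with
    | mem a ha =>
        rcases ha with rfl | rfl | rfl
        · exact step _ _ (smithRho_E l f) (fun v => smith_NE f η v)
        · exact step _ _ (smithRho_F l f) (fun v => smith_NF f η v)
        · exact step _ _ (smithRho_H l f) (fun v => smith_NH f η v)
    | algebraMap c =>
        intro w hw
        rw [← Algebra.smul_def]
        have : smithTheta l f (c • w) = c • smithTheta l f w := map_smul _ _ _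
        rw [this, map_smul,
          show c • w - c • (smithS f (smithTheta l f w))
            = c • (w - smithS f (smithTheta l f w)) from (smul_sub c _ _).symm]
        exact Submodule.smul_mem _ _ hw
    | add a b _ _ iha ihb =>
        intro w hw
        have : (a + b) * w - smithS f (smithTheta l f ((a + b) * w))
            = (a * w - smithS f (smithTheta l f (a * w)))
              + (b * w - smithS f (smithTheta l f (b * w))) := by
          rw [add_mul, map_add, map_add]
          abel
        rw [this]
        exact Submodule.add_mem _ (iha w hw) (ihb w hw)
    | mul a b _ _ iha ihb =>
        intro w hw
        rw [mul_assoc]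
        exact iha _ (ihb w hw)
  have := key x (by rw [smith_adjoin_top]; trivial) 1 hone
  rwa [mul_one] at this
  
end SmithAux


/-- For a nonsingular character `η` of `R(E)`, one has the vector space direct sum
decomposition `R(f) = R(F,H) ⊕ R(f)·R_η(E)`. -/
theorem smith_decomposition (f : ℂ[X]) (η : SmithRE f →ₐ[ℂ] ℂ) (hη : η (SmithE' f) ≠ 0) :
    IsCompl (Subalgebra.toSubmodule (SmithRFH f)) (SmithEtaIdeal f η) := by
  constructor
  · rw [disjoint_iff_inf_le]
    rintro x ⟨hx1, hx2⟩
    have hx1' : x ∈ SmithRFH f := hx1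
    obtain ⟨v, rfl⟩ := RFH_mem_range f hx1'
    have hz : smithTheta (η (SmithE' f)) f (smithS f v) = 0 := smithTheta_ideal f η hx2
    rw [smithTheta_smithS] at hz
    rw [hz, map_zero]
    exact Submodule.zero_mem ⊥
  · rw [codisjoint_iff_le_sup]
    intro x _
    refine Submodule.mem_sup.mpr
      ⟨smithS f (smithTheta (η (SmithE' f)) f x), ?_, x - smithS f (smithTheta (η (SmithE' f)) f x),
        smith_decomp_mem f η x, by abel⟩
    exact (Subalgebra.mem_toSubmodule _).mpr (smithS_mem_RFH f _)
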